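/- Continuous VC-dimension of the inner product, lower bound: Let ε ∈ (0,1) and let d be a positive integer with d ≤ 4/ε². Let H be a real inner product space containing an orthonormal family e_1,…,e_d (e.g. dim H ≥ d). Then there exist vectors x_1,…,x_d in the closed unit ball of H, a threshold s ∈ ℝ, and for every subset S ⊆ {1,…,d} a vector y_S in the closed unit ball of H, such that for every S and every i: ⟪x_i, y_S⟫ ≥ s if i ∈ S, and ⟪x_i, y_S⟫ ≤ s − ε if i ∉ S. -/

import Mathlib

open RealInnerProductSpace

/-- Continuous VC-dimension of the inner product: lower bound construction. -/
theorem vc_inner_product_lower_bound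
    {H : Type*} [NormedAddCommGroup H] [InnerProductSpace ℝ H]
    (ε : ℝ) (hε : ε ∈ Set.Ioo (0 : ℝ) 1) (d : ℕ) (hd : 0 < d)
    (hdε : (d : ℝ) ≤ 4 / ε ^ 2)
    (e : Fin d → H) (he : Orthonormal ℝ e) :
    ∃ (x : Fin d → H) (s : ℝ) (y : Finset (Fin d) → H),
      (∀ i, ‖x i‖ ≤ 1) ∧ (∀ S, ‖y S‖ ≤ 1) ∧
      ∀ (S : Finset (Fin d)) (i : Fin d),
        (i ∈ S → s ≤ ⟪x i, y S⟫) ∧ (i ∉ S → ⟪x i, y S⟫ ≤ s - ε) := by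
  obtain ⟨hε0, hε1⟩ := hε
  set v : Finset (Fin d) → Fin d → H :=
    fun S j => if j ∈ S then e j else -e j with hv
  have hvon : ∀ S, Orthonormal ℝ (v S) := by
    intro S
    rw [orthonormal_iff_ite]
    intro i j
    have h := orthonormal_iff_ite.mp he i j
    simp only [hv]
    by_cases hi : i ∈ S <;> by_cases hj : j ∈ S <;>
      simp only [if_pos, if_neg, hi, hj, inner_neg_left, inner_neg_right, h,
        neg_neg, if_true, if_false] <;>
      split_ifs with hij <;> simp_all
  refine ⟨e, ε / 2, fun S => (ε / 2) • ∑ j, v S j, ?_, ?_, ?_⟩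
  · intro i; rw [he.1 i]
  · intro S
    have hnorm : ‖∑ j, v S j‖ = Real.sqrt d := by
      have hsum : ⟪∑ j, v S j, ∑ j, v S j⟫ = (d : ℝ) := by
        have h := (hvon S).inner_sum (fun _ => 1) (fun _ => 1) Finset.univ
        simpa using h
      rw [← Real.sqrt_sq (norm_nonneg _), ← real_inner_self_eq_norm_sq, hsum]
    rw [norm_smul, hnorm, Real.norm_eq_abs, abs_of_pos (by linarith)]
    have hsd : Real.sqrt d ≤ 2 / ε := by
      rw [show (2 : ℝ) / ε = Real.sqrt ((2 / ε) ^ 2) by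
        rw [Real.sqrt_sq (by positivity)]]
      apply Real.sqrt_le_sqrt
      rwa [div_pow, show (2:ℝ)^2 = 4 by norm_num]
    calc ε / 2 * Real.sqrt d ≤ ε / 2 * (2 / ε) := by
          apply mul_le_mul_of_nonneg_left hsd (by linarith)
      _ = 1 := by field_simp
  · intro S i
    have hinner : ⟪e i, (ε / 2) • ∑ j, v S j⟫ =
        (ε / 2) * (if i ∈ S then 1 else -1) := by
      rw [real_inner_smul_right, inner_sum]
      congr 1
      have : ∀ j, ⟪e i, v S j⟫ = if j = i then (if i ∈ S then 1 else -1) else 0 := by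
        intro j
        have h := orthonormal_iff_ite.mp he i j
        simp only [hv]
        by_cases hj : j ∈ S <;> by_cases hji : j = i
        · subst hji; simp [hj, h, he.1 j]
        · simp [hj, hji, h, Ne.symm hji]
        · subst hji; simp [hj, h, inner_neg_right, he.1 j]
        · simp [hj, hji, h, Ne.symm hji, inner_neg_right]
      rw [Finset.sum_congr rfl (fun j _ => this j)]
      simp
    constructor
    · intro hi; rw [hinner]; simp [hi]
    · intro hi; rw [hinner, if_neg hi]; linarith
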